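/- The partial reserve and the transition matrix are jointly recovered from a single product integral: ∏_t^T (I + [[M(u)−r(u)I, R(u)],[0, M(u)]] du) = [[∏_t^T (I+(M(u)−r(u)I)du), V(t)],[0, P(t,T)]], where V(t) = ∫_t^T ∏_t^u (I+(M(s)−r(s)I)ds) R(u) ∏_u^T (I+M(s)ds) du. -/

import Mathlib

open Matrix MeasureTheory

attribute [local instance] Matrix.linftyOpNormedAddCommGroup Matrix.linftyOpNormedSpace
  Matrix.linftyOpNormedRing Matrix.linftyOpNormedAlgebra

section helpers

variable {n : Type*} [Fintype n] [DecidableEq n]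

/-- Uniqueness for the linear matrix ODE `f' = f * A`. -/
lemma matrix_ode_unique (A : ℝ → Matrix n n ℝ) (hA : Continuous A)
    (f g : ℝ → Matrix n n ℝ)
    (hf : ∀ u, HasDerivAt f (f u * A u) u)
    (hg : ∀ u, HasDerivAt g (g u * A u) u)
    (t₀ : ℝ) (h0 : f t₀ = g t₀) (T : ℝ) : f T = g T := by
  set a : ℝ := min t₀ T - 1 with ha
  set b : ℝ := max t₀ T + 1 with hb
  have hab : a < b := by
    have h1 : min t₀ T ≤ max t₀ T := le_trans (min_le_left _ _) (le_max_left _ _)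
    dsimp [a, b]; linarith
  obtain ⟨C, hC⟩ := (isCompact_Icc (a := a) (b := b)).exists_bound_of_continuousOn
    hA.continuousOn
  set K : NNReal := ⟨max C 0, le_max_right _ _⟩ with hK
  set π : ℝ → ℝ := fun u => max a (min b u) with hπ
  have hπ_mem : ∀ u, π u ∈ Set.Icc a b := by
    intro u
    constructor
    · exact le_max_left _ _
    · exact max_le hab.le (min_le_left _ _)
  set v : ℝ → Matrix n n ℝ → Matrix n n ℝ := fun u X => X * A (π u) with hv
  have hlip : ∀ u, LipschitzWith K (v u) := by
    intro u
    apply LipschitzWith.of_dist_le_mul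
    intro X Y
    rw [dist_eq_norm, dist_eq_norm]
    calc ‖X * A (π u) - Y * A (π u)‖ = ‖(X - Y) * A (π u)‖ := by rw [sub_mul]
      _ ≤ ‖X - Y‖ * ‖A (π u)‖ := norm_mul_le _ _
      _ ≤ ‖X - Y‖ * (K : ℝ) := by
          apply mul_le_mul_of_nonneg_left _ (norm_nonneg _)
          exact le_trans (hC _ (hπ_mem u)) (le_max_left _ _)
      _ = (K : ℝ) * ‖X - Y‖ := mul_comm _ _
  have hπ_eq : ∀ u ∈ Set.Ioo a b, π u = u := by
    intro u hu
    dsimp [π]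
    rw [min_eq_right hu.2.le, max_eq_right hu.1.le]
  have ht₀ : t₀ ∈ Set.Ioo a b := by
    constructor
    · have : min t₀ T ≤ t₀ := min_le_left _ _
      dsimp [a]; linarith
    · have : t₀ ≤ max t₀ T := le_max_left _ _
      dsimp [b]; linarith
  have hT : T ∈ Set.Icc a b := by
    constructor
    · have : min t₀ T ≤ T := min_le_right _ _
      dsimp [a]; linarith
    · have : T ≤ max t₀ T := le_max_right _ _
      dsimp [b]; linarith
  have key := ODE_solution_unique_of_mem_Icc (v := v) (s := fun _ => Set.univ)
    (fun u _ => (hlip u).lipschitzOnWith) ht₀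
    (fun u _ => (hf u).continuousAt.continuousWithinAt)
    (fun u hu => by rw [hv]; simp only []; rw [hπ_eq u hu]; exact hf u)
    (fun u _ => Set.mem_univ _)
    (fun u _ => (hg u).continuousAt.continuousWithinAt)
    (fun u hu => by rw [hv]; simp only []; rw [hπ_eq u hu]; exact hg u)
    (fun u _ => Set.mem_univ _) h0
  exact key hT

end helpers

section helpers2

variable {n : Type*} [Fintype n] [DecidableEq n]

/-- The flow property (cocycle). -/
lemma matrix_ode_cocycle (A : ℝ → Matrix n n ℝ) (hA : Continuous A)
    (P : ℝ → ℝ → Matrix n n ℝ)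
    (hP : ∀ s t : ℝ, HasDerivAt (fun u => P s u) (P s t * A t) t)
    (hP0 : ∀ s : ℝ, P s s = 1) (s u T : ℝ) :
    P s T = P s u * P u T := by
  refine matrix_ode_unique A hA (P s) (fun y => P s u * P u y) (hP s)
    (fun y => by have := (hP u y).const_mul (P s u); show HasDerivAt _ (P s u * P u y * A y) y; rw [mul_assoc]; exact this) u ?_ T
  show P s u = P s u * P u u
  rw [hP0, mul_one]

/-- Continuity of the flow in its first argument. -/
lemma matrix_ode_cont_fst (A : ℝ → Matrix n n ℝ) (hA : Continuous A)
    (P : ℝ → ℝ → Matrix n n ℝ)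
    (hP : ∀ s t : ℝ, HasDerivAt (fun u => P s u) (P s t * A t) t)
    (hP0 : ∀ s : ℝ, P s s = 1) (T : ℝ) :
    Continuous (fun u => P u T) := by
  have hunit : ∀ u : ℝ, IsUnit (P T u) := by
    intro u
    exact ⟨⟨P T u, P u T,
      by rw [← matrix_ode_cocycle A hA P hP hP0 T u T, hP0],
      by rw [← matrix_ode_cocycle A hA P hP hP0 u T u, hP0]⟩, rfl⟩
  have hkey : ∀ u : ℝ, P u T = Ring.inverse (P T u) := by
    intro u
    obtain ⟨x, hx⟩ := hunit u
    rw [← hx, Ring.inverse_unit]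
    have h1 : (x : Matrix n n ℝ) * P u T = 1 := by
      rw [hx, ← matrix_ode_cocycle A hA P hP hP0 T u T, hP0]
    calc P u T = (x⁻¹ * x) * P u T := by rw [x.inv_mul, one_mul]
      _ = x⁻¹ * ((x : Matrix n n ℝ) * P u T) := by rw [mul_assoc]
      _ = x⁻¹ := by rw [h1, mul_one]
  have hcont : Continuous (fun u : ℝ => P T u) :=
    continuous_iff_continuousAt.mpr (fun u => (hP T u).continuousAt)
  have : Continuous (fun u : ℝ => Ring.inverse (P T u)) := by
    refine continuous_iff_continuousAt.mpr (fun u => ?_)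
    obtain ⟨x, hx⟩ := hunit u
    exact (hx ▸ NormedRing.inverse_continuousAt x).comp (hcont.continuousAt)
  simpa [← hkey] using this

end helpers2

section blocks

variable {n : Type*} [Fintype n] [DecidableEq n]

private noncomputable def blkL1 : Matrix n n ℝ →L[ℝ] Matrix (n ⊕ n) (n ⊕ n) ℝ :=
  LinearMap.toContinuousLinearMap
    { toFun := fun X => Matrix.fromBlocks X 0 0 0
      map_add' := fun X Y => by ext (i | i) (j | j) <;> simp [Matrix.fromBlocks]
      map_smul' := fun c X => by ext (i | i) (j | j) <;> simp [Matrix.fromBlocks] }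

private noncomputable def blkL2 : Matrix n n ℝ →L[ℝ] Matrix (n ⊕ n) (n ⊕ n) ℝ :=
  LinearMap.toContinuousLinearMap
    { toFun := fun X => Matrix.fromBlocks 0 X 0 0
      map_add' := fun X Y => by ext (i | i) (j | j) <;> simp [Matrix.fromBlocks]
      map_smul' := fun c X => by ext (i | i) (j | j) <;> simp [Matrix.fromBlocks] }

private noncomputable def blkL3 : Matrix n n ℝ →L[ℝ] Matrix (n ⊕ n) (n ⊕ n) ℝ :=
  LinearMap.toContinuousLinearMap
    { toFun := fun X => Matrix.fromBlocks 0 0 X 0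
      map_add' := fun X Y => by ext (i | i) (j | j) <;> simp [Matrix.fromBlocks]
      map_smul' := fun c X => by ext (i | i) (j | j) <;> simp [Matrix.fromBlocks] }

private noncomputable def blkL4 : Matrix n n ℝ →L[ℝ] Matrix (n ⊕ n) (n ⊕ n) ℝ :=
  LinearMap.toContinuousLinearMap
    { toFun := fun X => Matrix.fromBlocks 0 0 0 X
      map_add' := fun X Y => by ext (i | i) (j | j) <;> simp [Matrix.fromBlocks]
      map_smul' := fun c X => by ext (i | i) (j | j) <;> simp [Matrix.fromBlocks] }

omit [DecidableEq n] in
private lemma blk_decomp (A B C D : Matrix n n ℝ) :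
    Matrix.fromBlocks A B C D = blkL1 A + blkL2 B + blkL3 C + blkL4 D := by
  ext (i | i) (j | j) <;>
    simp [blkL1, blkL2, blkL3, blkL4, Matrix.fromBlocks]

lemma hasDerivAt_fromBlocks {A B C D : ℝ → Matrix n n ℝ}
    {A' B' C' D' : Matrix n n ℝ} {x : ℝ}
    (hA : HasDerivAt A A' x) (hB : HasDerivAt B B' x)
    (hC : HasDerivAt C C' x) (hD : HasDerivAt D D' x) :
    HasDerivAt (fun u => Matrix.fromBlocks (A u) (B u) (C u) (D u))
      (Matrix.fromBlocks A' B' C' D') x := by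
  have h1 : HasDerivAt (fun u => blkL1 (A u)) (blkL1 A') x :=
    by have := (blkL1 (n := n)).hasFDerivAt.comp_hasDerivAt x hA; exact this
  have h2 : HasDerivAt (fun u => blkL2 (B u)) (blkL2 B') x :=
    by have := (blkL2 (n := n)).hasFDerivAt.comp_hasDerivAt x hB; exact this
  have h3 : HasDerivAt (fun u => blkL3 (C u)) (blkL3 C') x :=
    by have := (blkL3 (n := n)).hasFDerivAt.comp_hasDerivAt x hC; exact this
  have h4 : HasDerivAt (fun u => blkL4 (D u)) (blkL4 D') x :=
    by have := (blkL4 (n := n)).hasFDerivAt.comp_hasDerivAt x hD; exact this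
  simp only [blk_decomp]
  exact ((h1.add h2).add h3).add h4

end blocks

/-- The partial reserve and the transition matrix are jointly recovered
from a single product integral: the product integral from `t` to `T` of the block matrix
`[[M u - r u • 1, R u], [0, M u]]` equals
`[[∏_t^T (I + (M - r•I) du), V t], [0, P (t,T)]]` where
`V t = ∫_t^T ∏_t^u (I + (M - r•I) ds) * R u * ∏_u^T (I + M ds) du`. -/
theorem partial_reserve_via_block_productIntegral {p : ℕ} (T : ℝ)
    (M R : ℝ → Matrix (Fin p) (Fin p) ℝ) (r : ℝ → ℝ)
    (hM : Continuous M) (hR : Continuous R) (hr : Continuous r)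
    (P F : ℝ → ℝ → Matrix (Fin p) (Fin p) ℝ)
    (hP : ∀ s t : ℝ, HasDerivAt (fun u => P s u) (P s t * M t) t)
    (hP0 : ∀ s : ℝ, P s s = 1)
    (hF : ∀ s t : ℝ, HasDerivAt (fun u => F s u) (F s t * (M t - r t • 1)) t)
    (hF0 : ∀ s : ℝ, F s s = 1)
    (G : ℝ → ℝ → Matrix (Fin p ⊕ Fin p) (Fin p ⊕ Fin p) ℝ)
    (hG : ∀ s t : ℝ,
      HasDerivAt (fun u => G s u)
        (G s t * Matrix.fromBlocks (M t - r t • 1) (R t) 0 (M t)) t)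
    (hG0 : ∀ s : ℝ, G s s = 1) :
    ∀ t : ℝ,
      G t T = Matrix.fromBlocks (F t T)
        (∫ u in t..T, F t u * R u * P u T) 0 (P t T) := by
  intro t
  have hMr : Continuous (fun u => M u - r u • (1 : Matrix (Fin p) (Fin p) ℝ)) :=
    hM.sub (hr.smul continuous_const)
  set 𝔸 : ℝ → Matrix (Fin p ⊕ Fin p) (Fin p ⊕ Fin p) ℝ :=
    fun u => Matrix.fromBlocks (M u - r u • 1) (R u) 0 (M u) with h𝔸def
  have h𝔸 : Continuous 𝔸 := hMr.matrix_fromBlocks hR continuous_const hM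
  have hFc : Continuous (fun u => F t u) :=
    continuous_iff_continuousAt.mpr (fun u => (hF t u).continuousAt)
  have hPfst : ∀ y : ℝ, Continuous (fun u => P u y) :=
    fun y => matrix_ode_cont_fst M hM P hP hP0 y
  set V : ℝ → Matrix (Fin p) (Fin p) ℝ :=
    fun T' => ∫ u in t..T', F t u * R u * P u T' with hVdef
  have hV : ∀ y : ℝ, HasDerivAt V (F t y * R y + V y * M y) y := by
    intro y
    have hψ : Continuous (fun u => F t u * R u * P u y) :=
      (hFc.mul hR).mul (hPfst y)
    have hW : HasDerivAt (fun T' => ∫ u in t..T', F t u * R u * P u y)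
        (F t y * R y * P y y) y :=
      intervalIntegral.integral_hasDerivAt_right (hψ.intervalIntegrable _ _)
        (by haveI : TopologicalSpace.PseudoMetrizableSpace (Matrix (Fin p) (Fin p) ℝ) := inferInstanceAs (TopologicalSpace.PseudoMetrizableSpace (Fin p → Fin p → ℝ)); exact hψ.stronglyMeasurable.stronglyMeasurableAtFilter) hψ.continuousAt
    have hVeq : V = fun T' => (∫ u in t..T', F t u * R u * P u y) * P y T' := by
      funext T'
      have hco : ∀ u : ℝ, F t u * R u * P u T' = (F t u * R u * P u y) * P y T' := by
        intro u
        rw [matrix_ode_cocycle M hM P hP hP0 u y T']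
        simp only [mul_assoc]
      set c := P y T'
      set L : Matrix (Fin p) (Fin p) ℝ →L[ℝ] Matrix (Fin p) (Fin p) ℝ :=
        LinearMap.toContinuousLinearMap (LinearMap.mulRight ℝ c) with hL
      have hLapp : ∀ X : Matrix (Fin p) (Fin p) ℝ, L X = X * c := fun X => rfl
      calc V T' = ∫ u in t..T', L (F t u * R u * P u y) := by
            rw [hVdef]
            simp only []
            refine intervalIntegral.integral_congr (fun u _ => ?_)
            rw [hLapp, hco u]
        _ = L (∫ u in t..T', F t u * R u * P u y) :=
            L.intervalIntegral_comp_comm (hψ.intervalIntegrable _ _)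
        _ = (∫ u in t..T', F t u * R u * P u y) * c := hLapp _
    rw [hVeq]
    have hmul := hW.mul (hP y y)
    convert hmul using 1
    case e'_9 => simp [hP0]
    all_goals rfl
  set H : ℝ → Matrix (Fin p ⊕ Fin p) (Fin p ⊕ Fin p) ℝ :=
    fun T' => Matrix.fromBlocks (F t T') (V T') 0 (P t T') with hHdef
  have hH : ∀ y : ℝ, HasDerivAt H (H y * 𝔸 y) y := by
    intro y
    have hd := hasDerivAt_fromBlocks (hF t y) (hV y) (hasDerivAt_const y 0) (hP t y)
    have : H y * 𝔸 y = Matrix.fromBlocks (F t y * (M y - r y • 1))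
        (F t y * R y + V y * M y) 0 (P t y * M y) := by
      rw [hHdef, h𝔸def]
      simp only [Matrix.fromBlocks_multiply]
      congr 1 <;> simp
    rw [this]
    exact hd
  have hGode : ∀ y : ℝ, HasDerivAt (fun T' => G t T') (G t y * 𝔸 y) y := hG t
  have hinit : G t t = H t := by
    rw [hG0, hHdef]
    simp only [hF0, hP0, hVdef]
    rw [intervalIntegral.integral_same, ← Matrix.fromBlocks_one]
  exact matrix_ode_unique 𝔸 h𝔸 (fun T' => G t T') H hGode hH t hinit T
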